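/- Let D be a separable C*-algebra, J a closed two-sided ideal of D, B a C*-algebra over ℂ, π : D → M(B) a *-homomorphism into the multiplier algebra of B, and e ∈ M(B) a projection (e = e* = e²) such that the closure of the linear span of {π(j)·b : j ∈ J, b ∈ B} (products taken via the left action of M(B) on B) equals the set {e·b : b ∈ B}. Then (1) π(d)·e = e·π(d) in M(B) for every d ∈ D, and (2) if d ∈ D satisfies d·j = 0 for all j ∈ J, then π(d)·e = 0. -/
import Mathlib


open MultiplierAlgebra

lemma fst_inj_aux {B : Type*} [NonUnitalCStarAlgebra B] {a b : 𝓜(ℂ, B)}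
    (h : ∀ x : B, a.fst x = b.fst x) : a = b := by
  have h0 : (a - b).fst = 0 := ContinuousLinearMap.ext fun x => by
    rw [DoubleCentralizer.sub_fst]
    simp [h x]
  have hn := DoubleCentralizer.norm_fst (a - b)
  rw [h0, norm_zero] at hn
  exact sub_eq_zero.mp (norm_eq_zero.mp hn.symm)

/-- Let `D` be a separable C*-algebra, `J` a closed two-sided ideal of `D`,
`π : D → M(B)` a `*`-homomorphism into the multiplier algebra of a C*-algebra `B`, and
`e ∈ M(B)` a projection such that the closure of the linear span of `{π(j)·b : j ∈ J, b ∈ B}`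
equals `e·B`. Then `π(d)` commutes with `e` for every `d ∈ D`, and `π(d)·e = 0` whenever
`d·J = 0`. -/
theorem stmt_3 {D B : Type*} [NonUnitalCStarAlgebra D] [TopologicalSpace.SeparableSpace D]
    [NonUnitalCStarAlgebra B]
    (J : TwoSidedIdeal D) (hJclosed : IsClosed (J : Set D))
    (π : D →⋆ₙₐ[ℂ] 𝓜(ℂ, B)) (e : 𝓜(ℂ, B))
    (he_star : star e = e) (he_idem : e * e = e)
    (he : closure (Submodule.span ℂ {x : B | ∃ j ∈ J, ∃ b : B, (π j).fst b = x} : Set B)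
        = {x : B | ∃ b : B, e.fst b = x}) :
    (∀ d : D, π d * e = e * π d) ∧
    (∀ d : D, (∀ j ∈ J, d * j = 0) → π d * e = 0) := by
  set S : Set B := {x : B | ∃ j ∈ J, ∃ b : B, (π j).fst b = x} with hS
  set X : Set B := closure (Submodule.span ℂ S : Set B) with hX
  -- every element of X is fixed by e
  have hfix : ∀ x ∈ X, e.fst x = x := by
    intro x hx
    rw [he] at hx
    obtain ⟨b, rfl⟩ := hx
    have : (e * e).fst b = e.fst b := by rw [he_idem]
    simpa [DoubleCentralizer.mul_fst] using this
  -- e.fst b ∈ X for all b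
  have heX : ∀ b : B, e.fst b ∈ X := by
    intro b
    rw [he]
    exact ⟨b, rfl⟩
  -- π d maps X into X
  have hmap : ∀ (d : D), ∀ x ∈ X, (π d).fst x ∈ X := by
    intro d x hx
    have hspan : Set.MapsTo (π d).fst (Submodule.span ℂ S : Set B)
        (Submodule.span ℂ S : Set B) := by
      intro y hy
      refine Submodule.span_induction (hx := hy) ?_ ?_ ?_ ?_
      · rintro z ⟨j, hj, b, rfl⟩
        refine Submodule.subset_span ⟨d * j, J.mul_mem_left d j hj, b, ?_⟩
        simp [map_mul, DoubleCentralizer.mul_fst]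
      · simp
      · intro a b _ _ ha hb
        simpa [map_add] using Submodule.add_mem _ ha hb
      · intro c a _ ha
        simpa [map_smul] using Submodule.smul_mem _ c ha
    exact map_mem_closure (π d).fst.continuous hx hspan
  -- key: π d * e = e * π d * e
  have key : ∀ d : D, π d * e = e * (π d * e) := by
    intro d
    refine fst_inj_aux fun b => ?_
    have h1 : (π d).fst (e.fst b) ∈ X := hmap d _ (heX b)
    have := hfix _ h1
    simp [DoubleCentralizer.mul_fst, this]
  have comm : ∀ d : D, π d * e = e * π d := by
    intro d
    have h1 := key d
    have h2 := key (star d)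
    have h3 := congrArg star h2
    rw [star_mul, star_mul, star_mul, map_star, star_star, he_star] at h3
    -- h3 : e * π d = (e * π d) * e
    calc π d * e = e * (π d * e) := h1
    _ = e * π d * e := by rw [mul_assoc]
    _ = e * π d := by rw [← h3]
  refine ⟨comm, ?_⟩
  intro d hd
  refine fst_inj_aux fun b => ?_
  have hzero : Set.MapsTo (π d).fst (Submodule.span ℂ S : Set B) ({0} : Set B) := by
    intro y hy
    refine Submodule.span_induction (hx := hy) ?_ ?_ ?_ ?_
    · rintro z ⟨j, hj, b', rfl⟩
      have : (π d * π j).fst b' = 0 := by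
        rw [← map_mul, hd j hj, map_zero]
        simp [DoubleCentralizer.zero_fst]
      simpa [DoubleCentralizer.mul_fst] using this
    · simp
    · intro a b' _ _ ha hb'
      simp only [Set.mem_singleton_iff] at ha hb' ⊢
      simp [map_add, ha, hb']
    · intro c a _ ha
      simp only [Set.mem_singleton_iff] at ha ⊢
      simp [map_smul, ha]
  have h1 : (π d).fst (e.fst b) ∈ closure ({0} : Set B) :=
    map_mem_closure (π d).fst.continuous (heX b) hzero
  rw [closure_singleton, Set.mem_singleton_iff] at h1
  simpa [DoubleCentralizer.mul_fst, DoubleCentralizer.zero_fst] using h1
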